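/- Let p be a positive integer, let Λ ⊆ F_2^n belong to the family 𝚲(2p), and let E_1, …, E_{2p} be subsets of Λ. Suppose [2p] = C_1 ⊔ ⋯ ⊔ C_r is a partition into r classes. For S* ⊆ [2p] with |S*| = p, let M(S*) be the p×p matrix with entries m_{ij} = |E_i ∩ E_j| for i ∈ S*, j ∈ [2p]∖S*. Then the number of solutions of λ_1 + ⋯ + λ_{2p} = 0 with λ_i ∈ E_i (i = 1,…,2p) is at most Σ_{S*} per M(S*), where the sum is over all sets S* ⊆ [2p] of size p that contain at least one element from every class C_i with |C_i| ≥ 2. -/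

import Mathlib

open Finset

/-- `Λ` belongs to the family `𝚲(m)`: no nonempty subset of `Λ` of size at most `m`
has zero sum. -/
def InLambdaFamily {G : Type*} [AddCommGroup G] (m : ℕ) (Λ : Finset G) : Prop :=
  ∀ S ⊆ Λ, S.Nonempty → S.card ≤ m → ∑ x ∈ S, x ≠ 0

/-- The permanent of the matrix `M(S*) = (|E_i ∩ E_j|)_{i ∈ S*, j ∉ S*}`:
the sum over bijections `σ : S* → complement of S*` of `∏_{i∈S*} |E_i ∩ E_{σ(i)}|`. -/
def perM {n p : ℕ} (E : Fin (2 * p) → Finset (Fin n → ZMod 2))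
    (S : Finset (Fin (2 * p))) : ℕ :=
  ∑ σ : {i // i ∈ S} ≃ {i // i ∈ Sᶜ},
    ∏ i : {i // i ∈ S}, (E i.val ∩ E (σ i).val).card


lemma pair_invol {α : Type*} [DecidableEq α] :
    ∀ (s : Finset α), Even s.card →
      ∃ f : α → α, ∀ x ∈ s, f x ∈ s ∧ f x ≠ x ∧ f (f x) = x := by
  intro s
  induction s using Finset.strongInduction with
  | _ s ih =>
    intro hs
    rcases s.eq_empty_or_nonempty with rfl | ⟨a, ha⟩
    · exact ⟨id, by simp⟩
    have h2 : 2 ≤ s.card := by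
      rcases hs with ⟨k, hk⟩
      have h0 : 0 < s.card := Finset.card_pos.mpr ⟨a, ha⟩
      omega
    have hbne : (s.erase a).Nonempty := by
      rw [← Finset.card_pos, Finset.card_erase_of_mem ha]; omega
    obtain ⟨b, hb⟩ := hbne
    have hba : b ≠ a := Finset.ne_of_mem_erase hb
    have hbs : b ∈ s := Finset.mem_of_mem_erase hb
    have hsub : (s.erase a).erase b ⊂ s :=
      lt_of_le_of_lt (Finset.erase_subset _ _) (Finset.erase_ssubset ha)
    have hcard : ((s.erase a).erase b).card = s.card - 2 := by
      rw [Finset.card_erase_of_mem hb, Finset.card_erase_of_mem ha]; omega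
    have heven : Even ((s.erase a).erase b).card := by
      rcases hs with ⟨k, hk⟩
      exact ⟨k - 1, by omega⟩
    obtain ⟨f', hf'⟩ := ih _ hsub heven
    refine ⟨fun x => if x = a then b else if x = b then a else f' x, ?_⟩
    intro x hx
    by_cases hxa : x = a
    · subst hxa
      exact ⟨by simp [hbs], by simp [hba], by simp [hba]⟩
    by_cases hxb : x = b
    · subst hxb
      exact ⟨by simp [hxa, ha], by simp [hxa, Ne.symm hba], by simp [hxa]⟩
    · have hx' : x ∈ (s.erase a).erase b :=
        Finset.mem_erase.mpr ⟨hxb, Finset.mem_erase.mpr ⟨hxa, hx⟩⟩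
      obtain ⟨m1, m2, m3⟩ := hf' x hx'
      have hfa : f' x ≠ a := (Finset.mem_erase.mp (Finset.mem_erase.mp m1).2).1
      have hfb : f' x ≠ b := (Finset.mem_erase.mp m1).1
      simp only [if_neg hxa, if_neg hxb, if_neg hfa, if_neg hfb]
      exact ⟨Finset.mem_of_mem_erase (Finset.mem_of_mem_erase m1), m2, m3⟩

lemma glue_invol {α G : Type*} [Fintype α] [DecidableEq α] [DecidableEq G] (lam : α → G)
    (h : ∀ i, Even ((univ.filter (fun j => lam j = lam i)).card)) :
    ∃ f : α → α, ∀ i, f i ≠ i ∧ f (f i) = i ∧ lam (f i) = lam i := by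
  classical
  have hQ : ∀ s : Finset α, ∃ g : α → α, Even s.card →
      ∀ x ∈ s, g x ∈ s ∧ g x ≠ x ∧ g (g x) = x := by
    intro s
    by_cases hs : Even s.card
    · obtain ⟨g, hg⟩ := pair_invol s hs
      exact ⟨g, fun _ => hg⟩
    · exact ⟨id, fun hs' => absurd hs' hs⟩
  choose Q hQ' using hQ
  set fib : α → Finset α := fun i => univ.filter (fun j => lam j = lam i) with hfib
  refine ⟨fun i => Q (fib i) i, fun i => ?_⟩
  have hi : i ∈ fib i := by simp [hfib]
  obtain ⟨m1, m2, m3⟩ := hQ' (fib i) (h i) i hi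
  have hlam : lam (Q (fib i) i) = lam i := by
    have := (Finset.mem_filter.mp m1).2
    exact this
  have hfibeq : fib (Q (fib i) i) = fib i := by
    simp only [hfib]
    ext j
    simp only [hfib] at hlam
    simp [hlam]
  refine ⟨m2, ?_, hlam⟩
  show Q (fib (Q (fib i) i)) (Q (fib i) i) = i
  rw [hfibeq, m3]

lemma transversal {N r : ℕ} (f : Fin N → Fin N) (hf1 : ∀ x, f x ≠ x) (hf2 : ∀ x, f (f x) = x)
    (C : Fin r → Finset (Fin N)) (hCdisj : ∀ i j, i ≠ j → Disjoint (C i) (C j)) :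
    ∃ S : Finset (Fin N), (∀ x, x ∈ S ↔ f x ∉ S) ∧
      ∀ i, 2 ≤ (C i).card → (S ∩ C i).Nonempty := by
  classical
  set rep : Fin N → Fin N := fun x => min x (f x) with hrep
  have rep_mem : ∀ x, rep x = x ∨ rep x = f x := fun x => min_choice _ _
  have rep_f : ∀ x, rep (f x) = rep x := by
    intro x; simp only [hrep, hf2]; exact min_comm _ _
  have rep_eq : ∀ a b, rep a = rep b → a = b ∨ a = f b := by
    intro a b hab
    rcases rep_mem a with h1 | h1 <;> rcases rep_mem b with h2 | h2
    · left; rw [← h1, hab, h2]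
    · right; rw [← h1, hab, h2]
    · right; have : f a = b := by rw [← h1, hab, h2]
      rw [← this, hf2]
    · left; have : f a = f b := by rw [← h1, hab, h2]
      have := congrArg f this; rwa [hf2, hf2] at this
  set B : Finset (Fin r) := univ.filter (fun i => 2 ≤ (C i).card ∧ ∀ x ∈ C i, f x ∉ C i) with hB
  set t : {i // i ∈ B} → Finset (Fin N) := fun i => (C i.1).image rep with ht
  have hloopless : ∀ i : {i // i ∈ B}, ∀ x ∈ C i.1, f x ∉ C i.1 := by
    intro i; exact ((Finset.mem_filter.mp i.2).2).2
  have hbig : ∀ i : {i // i ∈ B}, 2 ≤ (C i.1).card := by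
    intro i; exact ((Finset.mem_filter.mp i.2).2).1
  have hinjOn : ∀ i : {i // i ∈ B}, Set.InjOn rep (C i.1) := by
    intro i x hx y hy hxy
    rcases rep_eq x y hxy with h | h
    · exact h
    · exfalso
      rw [h] at hx
      exact hloopless i y hy hx
  have htcard : ∀ i : {i // i ∈ B}, (t i).card = (C i.1).card := by
    intro i; exact Finset.card_image_of_injOn (hinjOn i)
  -- Hall condition
  have hall : ∀ s : Finset {i // i ∈ B}, s.card ≤ (s.biUnion t).card := by
    intro s
    have key : ∑ i ∈ s, (t i).card ≤ 2 * (s.biUnion t).card := by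
      have step1 : ∑ i ∈ s, (t i).card
          = ∑ i ∈ s, ((s.biUnion t).filter (· ∈ t i)).card := by
        refine Finset.sum_congr rfl fun i hi => ?_
        rw [Finset.filter_mem_eq_inter,
          Finset.inter_eq_right.mpr (Finset.subset_biUnion_of_mem t hi)]
      rw [step1]
      have step2 : ∑ i ∈ s, ((s.biUnion t).filter (· ∈ t i)).card
          = ∑ e ∈ s.biUnion t, (s.filter (fun i => e ∈ t i)).card := by
        simp only [Finset.card_filter]
        rw [Finset.sum_comm]
      rw [step2]
      have step3 : ∀ e ∈ s.biUnion t, (s.filter (fun i => e ∈ t i)).card ≤ 2 := by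
        intro e _
        have : (s.filter (fun i => e ∈ t i)).card ≤ ({e, f e} : Finset (Fin N)).card := by
          apply Finset.card_le_card_of_injOn
            (fun i => if h : ∃ x ∈ C i.1, rep x = e then h.choose else e)
          · intro i hi
            have he : e ∈ t i := (Finset.mem_filter.mp hi).2
            have hex : ∃ x ∈ C i.1, rep x = e := by
              obtain ⟨x, hx, hxe⟩ := Finset.mem_image.mp he
              exact ⟨x, hx, hxe⟩
            simp only [dif_pos hex]
            obtain ⟨hx, hxe⟩ := hex.choose_spec
            have : hex.choose = e ∨ hex.choose = f e := by
              rcases rep_mem hex.choose with h | h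
              · left; rw [← h, hxe]
              · right
                have h' : f hex.choose = e := by rw [← h, hxe]
                have h'' := congrArg f h'
                rwa [hf2] at h''
            rcases this with h | h <;> simp [h]
          · intro i1 hi1 i2 hi2 heq
            by_contra hne
            have hne' : i1.1 ≠ i2.1 := fun h => hne (Subtype.ext h)
            have he1 : e ∈ t i1 := (Finset.mem_filter.mp hi1).2
            have he2 : e ∈ t i2 := (Finset.mem_filter.mp hi2).2
            have hex1 : ∃ x ∈ C i1.1, rep x = e := by
              obtain ⟨x, hx, hxe⟩ := Finset.mem_image.mp he1; exact ⟨x, hx, hxe⟩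
            have hex2 : ∃ x ∈ C i2.1, rep x = e := by
              obtain ⟨x, hx, hxe⟩ := Finset.mem_image.mp he2; exact ⟨x, hx, hxe⟩
            simp only [dif_pos hex1, dif_pos hex2] at heq
            have h1 := hex1.choose_spec.1
            have h2 := hex2.choose_spec.1
            rw [heq] at h1
            have := (hCdisj i1.1 i2.1 hne').le_bot (Finset.mem_inter.mpr ⟨h1, h2⟩)
            simp at this
        calc (s.filter (fun i => e ∈ t i)).card ≤ _ := this
          _ ≤ 2 := by
            apply le_trans (Finset.card_insert_le _ _)
            simp
      calc ∑ e ∈ s.biUnion t, (s.filter (fun i => e ∈ t i)).card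
          ≤ ∑ _e ∈ s.biUnion t, 2 := Finset.sum_le_sum step3
        _ = 2 * (s.biUnion t).card := by rw [Finset.sum_const]; ring
    have hge : 2 * s.card ≤ ∑ i ∈ s, (t i).card := by
      calc 2 * s.card = ∑ _i ∈ s, 2 := by rw [Finset.sum_const]; ring
        _ ≤ ∑ i ∈ s, (t i).card := by
            refine Finset.sum_le_sum fun i _ => ?_
            rw [htcard i]; exact hbig i
    omega
  obtain ⟨ed, hed_inj, hed_mem⟩ := (Finset.all_card_le_biUnion_card_iff_exists_injective t).mp hall
  have hw : ∀ i : {i // i ∈ B}, ∃ x, x ∈ C i.1 ∧ rep x = ed i := by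
    intro i
    obtain ⟨x, hx, hxe⟩ := Finset.mem_image.mp (hed_mem i)
    exact ⟨x, hx, hxe⟩
  choose w hw1 hw2 using hw
  set g : Fin N → Fin N := fun e => if h : ∃ i, ed i = e then w h.choose else e with hg
  set S : Finset (Fin N) := univ.filter (fun y => g (rep y) = y) with hS
  have grange : ∀ y, g (rep y) = y ∨ g (rep y) = f y := by
    intro y
    by_cases h : ∃ i, ed i = rep y
    · have : g (rep y) = w h.choose := by simp only [hg, dif_pos h]
      rw [this]
      have : rep (w h.choose) = rep y := by rw [hw2, h.choose_spec]
      exact rep_eq _ _ this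
    · have : g (rep y) = rep y := by simp only [hg, dif_neg h]
      rw [this]; exact rep_mem y
  have hmemS : ∀ y, y ∈ S ↔ f y ∉ S := by
    intro y
    have hy : y ∈ S ↔ g (rep y) = y := by
      simp [hS]
    have hfy : f y ∈ S ↔ g (rep y) = f y := by
      simp only [hS, Finset.mem_filter, Finset.mem_univ, true_and]
      rw [rep_f]
    rw [hy, hfy]
    rcases grange y with h | h
    · exact ⟨fun _ hcon => hf1 y (h.symm.trans hcon).symm, fun _ => h⟩
    · exact ⟨fun hy' => absurd (hy'.symm.trans h) (fun q => hf1 y q.symm), fun hn => absurd h hn⟩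
  refine ⟨S, hmemS, ?_⟩
  intro i hcard
  by_cases hloop : ∀ x ∈ C i, f x ∉ C i
  · have hiB : i ∈ B := Finset.mem_filter.mpr ⟨Finset.mem_univ i, hcard, hloop⟩
    set j : {i' // i' ∈ B} := ⟨i, hiB⟩ with hj
    refine ⟨w j, Finset.mem_inter.mpr ⟨?_, hw1 j⟩⟩
    simp only [hS, Finset.mem_filter, Finset.mem_univ, true_and]
    rw [hw2 j]
    have hex : ∃ i', ed i' = ed j := ⟨j, rfl⟩
    have : g (ed j) = w hex.choose := by simp only [hg, dif_pos hex]
    rw [this, hed_inj hex.choose_spec]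
  · push_neg at hloop
    obtain ⟨x, hx, hfx⟩ := hloop
    by_cases hxS : x ∈ S
    · exact ⟨x, Finset.mem_inter.mpr ⟨hxS, hx⟩⟩
    · have : f x ∈ S := by
        by_contra hcon
        exact hxS ((hmemS x).mpr hcon)
      exact ⟨f x, Finset.mem_inter.mpr ⟨this, hfx⟩⟩

/-- Reconstruction of a full tuple from its restriction to `S` together with
the matching bijection `σ`. -/
def decodeAux {N n : ℕ}
    (y : Σ S : Finset (Fin N), Σ _σ : ({i // i ∈ S} ≃ {i // i ∈ Sᶜ}),
      ({i // i ∈ S} → (Fin n → ZMod 2))) : Fin N → (Fin n → ZMod 2) :=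
  fun i => if h : i ∈ y.1 then y.2.2 ⟨i, h⟩
    else y.2.2 (y.2.1.symm ⟨i, Finset.mem_compl.mpr h⟩)


theorem stmt10 {n : ℕ} (p : ℕ) (hp : 0 < p)
    (Λ : Finset (Fin n → ZMod 2)) (hΛ : InLambdaFamily (2 * p) Λ)
    (E : Fin (2 * p) → Finset (Fin n → ZMod 2)) (hE : ∀ i, E i ⊆ Λ)
    (r : ℕ) (C : Fin r → Finset (Fin (2 * p)))
    (hCdisj : ∀ i j, i ≠ j → Disjoint (C i) (C j))
    (hCcover : ∀ x, ∃ i, x ∈ C i) :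
    ((Fintype.piFinset fun i : Fin (2 * p) => E i).filter
        fun lam => ∑ i, lam i = 0).card ≤
      ∑ S ∈ ((Finset.univ : Finset (Fin (2 * p))).powersetCard p).filter
          (fun S => ∀ i, 2 ≤ (C i).card → (S ∩ C i).Nonempty),
        perM E S := by
  classical
  set F := ((Finset.univ : Finset (Fin (2 * p))).powersetCard p).filter
      (fun S => ∀ i, 2 ≤ (C i).card → (S ∩ C i).Nonempty) with hF
  set Sol := ((Fintype.piFinset fun i : Fin (2 * p) => E i).filter
      fun lam => ∑ i, lam i = 0) with hSol
  set Big : Finset (Σ S : Finset (Fin (2 * p)),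
      Σ _σ : ({i // i ∈ S} ≃ {i // i ∈ Sᶜ}), ({i // i ∈ S} → (Fin n → ZMod 2))) :=
    F.sigma fun S => Finset.univ.sigma
      fun σ : {i // i ∈ S} ≃ {i // i ∈ Sᶜ} =>
        Fintype.piFinset fun i : {i // i ∈ S} => E i.1 ∩ E (σ i).1 with hBigdef
  have hBig : Big.card = ∑ S ∈ F, perM E S := by
    rw [hBigdef, Finset.card_sigma]
    refine Finset.sum_congr rfl fun S hS => ?_
    rw [Finset.card_sigma, perM]
    exact Finset.sum_congr rfl fun σ _ => Fintype.card_piFinset _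
  have hle : Sol.card ≤ Big.card := by
    apply Finset.card_le_card_of_surjOn (decodeAux (N := 2 * p) (n := n))
    intro lam hlam
    rw [Finset.mem_coe, hSol, Finset.mem_filter] at hlam
    obtain ⟨hpi, hsum⟩ := hlam
    have hmem : ∀ i, lam i ∈ E i := Fintype.mem_piFinset.mp hpi
    have hmemΛ : ∀ i, lam i ∈ Λ := fun i => hE i (hmem i)
    have hmaps : ∀ i ∈ (univ : Finset (Fin (2 * p))), lam i ∈ Λ := fun i _ => hmemΛ i
    have hself : ∀ v : Fin n → ZMod 2, v + v = 0 := by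
      intro v; funext t
      have : ∀ a : ZMod 2, a + a = 0 := by decide
      exact this (v t)
    -- Step 1 : all fibers have even cardinality
    have key0 : ∀ x ∈ Λ, Even ((univ.filter (fun j => lam j = x)).card) := by
      by_contra hodd
      push_neg at hodd
      set T := Λ.filter (fun x => ¬ Even ((univ.filter (fun j => lam j = x)).card)) with hT
      have hTne : T.Nonempty := by
        obtain ⟨x, hx, h⟩ := hodd; exact ⟨x, Finset.mem_filter.mpr ⟨hx, h⟩⟩
      have hTsub : T ⊆ Λ := Finset.filter_subset _ _
      have h2 : ∀ x ∈ Λ, ∑ i ∈ univ.filter (fun j => lam j = x), lam i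
          = if ¬ Even ((univ.filter (fun j => lam j = x)).card) then x else 0 := by
        intro x hx
        have hcst : ∑ i ∈ univ.filter (fun j => lam j = x), lam i
            = ((univ.filter (fun j => lam j = x)).card) • x := by
          rw [← Finset.sum_const]
          exact Finset.sum_congr rfl fun i hi => (Finset.mem_filter.mp hi).2
        rw [hcst]
        by_cases hev : Even ((univ.filter (fun j => lam j = x)).card)
        · rw [if_neg (not_not.mpr hev)]
          obtain ⟨k, hk⟩ := hev
          rw [hk, add_nsmul, ← nsmul_add, hself, smul_zero]
        · rw [if_pos hev]
          obtain ⟨k, hk⟩ := Nat.not_even_iff_odd.mp hev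
          have hk' : (univ.filter (fun j => lam j = x)).card = k + k + 1 := by omega
          rw [hk', add_nsmul, add_nsmul, ← nsmul_add, hself, smul_zero, zero_add, one_nsmul]
      have hsumT : ∑ x ∈ T, x = 0 := by
        have e1 : ∑ x ∈ T, x
            = ∑ x ∈ Λ, if ¬ Even ((univ.filter (fun j => lam j = x)).card) then x else 0 := by
          rw [hT, Finset.sum_filter]
        have e2 : ∑ x ∈ Λ, (if ¬ Even ((univ.filter (fun j => lam j = x)).card) then x else 0)
            = ∑ x ∈ Λ, ∑ i ∈ univ.filter (fun j => lam j = x), lam i :=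
          Finset.sum_congr rfl fun x hx => (h2 x hx).symm
        rw [e1, e2, Finset.sum_fiberwise_of_maps_to hmaps, hsum]
      have hTcard : T.card ≤ 2 * p := by
        have hc1 : ∀ x ∈ T, 1 ≤ (univ.filter (fun j => lam j = x)).card := by
          intro x hx
          have hodd' := (Finset.mem_filter.mp hx).2
          rcases Nat.eq_zero_or_pos ((univ.filter (fun j => lam j = x)).card) with h0 | h1
          · rw [h0] at hodd'; exact absurd Even.zero hodd'
          · exact h1
        calc T.card = ∑ _x ∈ T, 1 := by simp
          _ ≤ ∑ x ∈ T, (univ.filter (fun j => lam j = x)).card := Finset.sum_le_sum hc1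
          _ ≤ ∑ x ∈ Λ, (univ.filter (fun j => lam j = x)).card :=
              Finset.sum_le_sum_of_subset hTsub
          _ = (univ : Finset (Fin (2 * p))).card :=
              (Finset.card_eq_sum_card_fiberwise hmaps).symm
          _ = 2 * p := by simp
      exact hΛ T hTsub hTne hTcard hsumT
    have heven : ∀ i, Even ((univ.filter (fun j => lam j = lam i)).card) :=
      fun i => key0 (lam i) (hmemΛ i)
    -- Step 2 : fixed-point-free involution pairing equal values
    obtain ⟨f, hf⟩ := glue_invol lam heven
    have hf1 : ∀ x, f x ≠ x := fun x => (hf x).1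
    have hf2 : ∀ x, f (f x) = x := fun x => (hf x).2.1
    have hf3 : ∀ x, lam (f x) = lam x := fun x => (hf x).2.2
    -- Step 3 : transversal
    obtain ⟨S, hSmem, hShit⟩ := transversal f hf1 hf2 C hCdisj
    have hcpl : ∀ j, j ∈ Sᶜ → f j ∈ S := by
      intro j hj
      rw [Finset.mem_compl] at hj
      by_contra hc
      exact hj ((hSmem j).mpr hc)
    set σ : {i // i ∈ S} ≃ {i // i ∈ Sᶜ} :=
      { toFun := fun i => ⟨f i.1, Finset.mem_compl.mpr ((hSmem i.1).mp i.2)⟩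
        invFun := fun j => ⟨f j.1, hcpl j.1 j.2⟩
        left_inv := fun i => Subtype.ext (hf2 i.1)
        right_inv := fun j => Subtype.ext (hf2 j.1) } with hσ
    have hScard : S.card = p := by
      have h1 : S.card = Sᶜ.card := by
        rw [← Fintype.card_coe S, ← Fintype.card_coe Sᶜ]
        exact Fintype.card_congr σ
      have h2 : Sᶜ.card = Fintype.card (Fin (2 * p)) - S.card := Finset.card_compl S
      have h3 : S.card ≤ Fintype.card (Fin (2 * p)) := by
        rw [← Finset.card_univ]; exact Finset.card_le_univ S
      rw [Fintype.card_fin] at h2 h3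
      omega
    have hSF : S ∈ F := by
      rw [hF, Finset.mem_filter]
      exact ⟨Finset.mem_powersetCard_univ.mpr hScard, hShit⟩
    refine ⟨⟨S, σ, fun i => lam i.1⟩, ?_, ?_⟩
    · rw [Finset.mem_coe, hBigdef]
      refine Finset.mem_sigma.mpr ⟨hSF, Finset.mem_sigma.mpr ⟨Finset.mem_univ _, ?_⟩⟩
      refine Fintype.mem_piFinset.mpr fun i => Finset.mem_inter.mpr ⟨hmem i.1, ?_⟩
      show lam i.1 ∈ E ((σ i).1)
      have h' : (σ i).1 = f i.1 := rfl
      rw [h', ← hf3 i.1]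
      exact hmem (f i.1)
    · funext i
      by_cases h : i ∈ S
      · simp only [decodeAux, dif_pos h]
      · simp only [decodeAux, dif_neg h]
        have hsymm : (σ.symm ⟨i, Finset.mem_compl.mpr h⟩ : {i // i ∈ S})
            = ⟨f i, hcpl i (Finset.mem_compl.mpr h)⟩ := rfl
        rw [hsymm]
        exact hf3 i
  calc Sol.card ≤ Big.card := hle
    _ = ∑ S ∈ F, perM E S := hBig
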